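/- Let d ≥ 1 and let Y₁,…,Y_d be independent random variables with means μ₁,…,μ_d such that for each i and each δ > 0, P(|Y_i − μ_i| > δ) ≤ exp(−n_i·δ²/2) where n_i ≥ n_min > 0. Let a₁,…,a_d be reals, c = ∑|a_i|, Ŷ = ∑ a_i·Y_i and μ = ∑ a_i·μ_i. Then for ε ≥ √((2·ln d + 4·ln N)·c²/n_min) with N ≥ 1, P(|Ŷ − μ| > ε) ≤ d·exp(−n_min·ε²/(2c²)) ≤ N^{−2}. -/

import Mathlib

open MeasureTheory ProbabilityTheory

theorem stmt_7 {Ω : Type*} [MeasurableSpace Ω] (P : Measure Ω) [IsProbabilityMeasure P]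
    (d : ℕ) (hd : 1 ≤ d) (Y : Fin d → Ω → ℝ) (μ : Fin d → ℝ)
    (hmeas : ∀ i, Measurable (Y i))
    (hindep : iIndepFun Y P)
    (n : Fin d → ℝ) (nmin : ℝ) (hnmin : 0 < nmin) (hn : ∀ i, n i ≥ nmin)
    (hconc : ∀ i (δ : ℝ), 0 < δ →
      P {ω | |Y i ω - μ i| > δ} ≤ ENNReal.ofReal (Real.exp (-(n i) * δ ^ 2 / 2)))
    (a : Fin d → ℝ) (c : ℝ) (hc : c = ∑ i, |a i|) (hcpos : 0 < c)
    (N ε : ℝ) (hN : 1 ≤ N)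
    (hε : ε ≥ Real.sqrt ((2 * Real.log d + 4 * Real.log N) * c ^ 2 / nmin)) :
    P {ω | |(∑ i, a i * Y i ω) - ∑ i, a i * μ i| > ε} ≤
        ENNReal.ofReal (d * Real.exp (-nmin * ε ^ 2 / (2 * c ^ 2))) ∧
      (d : ℝ) * Real.exp (-nmin * ε ^ 2 / (2 * c ^ 2)) ≤ N ^ (-2 : ℝ) := by
  have hdR : (1:ℝ) ≤ d := by exact_mod_cast hd
  have hdpos : (0:ℝ) < d := by linarith
  have hlogd : 0 ≤ Real.log d := Real.log_nonneg hdR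
  have hlogN : 0 ≤ Real.log N := Real.log_nonneg hN
  have hc2 : (0:ℝ) < c ^ 2 := by positivity
  have hargnn : 0 ≤ (2 * Real.log d + 4 * Real.log N) * c ^ 2 / nmin := by positivity
  have hεnn : 0 ≤ ε := le_trans (Real.sqrt_nonneg _) hε
  have hε2 : (2 * Real.log d + 4 * Real.log N) * c ^ 2 / nmin ≤ ε ^ 2 := by
    nlinarith [Real.sq_sqrt hargnn, Real.sqrt_nonneg ((2 * Real.log d + 4 * Real.log N) * c ^ 2 / nmin)]
  have hkey : Real.log d + 2 * Real.log N ≤ nmin * ε ^ 2 / (2 * c ^ 2) := by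
    rw [div_le_iff₀ hnmin] at hε2
    rw [le_div_iff₀ (by positivity)]
    nlinarith
  -- second part
  have h2 : (d : ℝ) * Real.exp (-nmin * ε ^ 2 / (2 * c ^ 2)) ≤ N ^ (-2 : ℝ) := by
    have : Real.exp (-nmin * ε ^ 2 / (2 * c ^ 2)) ≤ Real.exp (-(Real.log d + 2 * Real.log N)) := by
      apply Real.exp_le_exp.2
      have : -nmin * ε ^ 2 / (2 * c ^ 2) = -(nmin * ε ^ 2 / (2 * c ^ 2)) := by ring
      rw [this]; linarith
    have hb : (d:ℝ) * Real.exp (-(Real.log d + 2 * Real.log N)) = N ^ (-2 : ℝ) := by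
      rw [Real.rpow_def_of_pos (by linarith : (0:ℝ) < N)]
      rw [show -(Real.log d + 2 * Real.log N) = -Real.log d + Real.log N * (-2) by ring,
        Real.exp_add, Real.exp_neg, Real.exp_log hdpos]
      field_simp
    calc (d : ℝ) * Real.exp (-nmin * ε ^ 2 / (2 * c ^ 2))
        ≤ (d:ℝ) * Real.exp (-(Real.log d + 2 * Real.log N)) := by
          exact mul_le_mul_of_nonneg_left this (le_of_lt hdpos)
      _ = N ^ (-2 : ℝ) := hb
  refine ⟨?_, h2⟩
  rcases eq_or_lt_of_le hεnn with heq | hεpos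
  · -- ε = 0 : bound trivially since RHS ≥ 1
    have : (1:ℝ) ≤ d * Real.exp (-nmin * ε ^ 2 / (2 * c ^ 2)) := by
      rw [← heq]
      simp only [ne_eq, OfNat.ofNat_ne_zero, not_false_eq_true, zero_pow, mul_zero, zero_div,
        Real.exp_zero, mul_one]
      exact hdR
    calc P _ ≤ 1 := prob_le_one
      _ ≤ ENNReal.ofReal (d * Real.exp (-nmin * ε ^ 2 / (2 * c ^ 2))) := by
          rw [show (1:ENNReal) = ENNReal.ofReal 1 by simp]
          exact ENNReal.ofReal_le_ofReal this
  · -- ε > 0 : union bound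
    have hsub : {ω | |(∑ i, a i * Y i ω) - ∑ i, a i * μ i| > ε} ⊆
        ⋃ i, {ω | |Y i ω - μ i| > ε / c} := by
      intro ω hω
      by_contra hcon
      simp only [Set.mem_iUnion, Set.mem_setOf_eq, not_exists, not_lt] at hcon
      apply absurd hω
      simp only [Set.mem_setOf_eq, not_lt]
      have heq1 : (∑ i, a i * Y i ω) - ∑ i, a i * μ i = ∑ i, a i * (Y i ω - μ i) := by
        rw [← Finset.sum_sub_distrib]
        exact Finset.sum_congr rfl (fun i _ => by ring)
      rw [heq1]
      refine le_trans (Finset.abs_sum_le_sum_abs _ _) ?_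
      have hstep : ∑ i, |a i * (Y i ω - μ i)| ≤ ∑ i, |a i| * (ε / c) := by
        apply Finset.sum_le_sum
        intro i _
        rw [abs_mul]
        exact mul_le_mul_of_nonneg_left (hcon i) (abs_nonneg _)
      refine le_trans hstep (le_of_eq ?_)
      rw [← Finset.sum_mul, ← hc]
      field_simp
    have hterm : ∀ i : Fin d, P {ω | |Y i ω - μ i| > ε / c} ≤
        ENNReal.ofReal (Real.exp (-nmin * ε ^ 2 / (2 * c ^ 2))) := by
      intro i
      refine le_trans (hconc i (ε / c) (by positivity)) (ENNReal.ofReal_le_ofReal ?_)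
      apply Real.exp_le_exp.2
      rw [div_pow]
      rw [div_le_div_iff₀ (by norm_num) (by positivity)]
      have hcc : -n i * (ε ^ 2 / c ^ 2) * (2 * c ^ 2) = -2 * n i * ε ^ 2 := by
        field_simp
      rw [hcc]
      nlinarith [mul_nonneg (sub_nonneg.2 (hn i)) (sq_nonneg ε)]
    calc P {ω | |(∑ i, a i * Y i ω) - ∑ i, a i * μ i| > ε}
        ≤ P (⋃ i, {ω | |Y i ω - μ i| > ε / c}) := measure_mono hsub
      _ ≤ ∑' i, P {ω | |Y i ω - μ i| > ε / c} := measure_iUnion_le _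
      _ = ∑ i, P {ω | |Y i ω - μ i| > ε / c} := tsum_fintype _
      _ ≤ ∑ _i : Fin d, ENNReal.ofReal (Real.exp (-nmin * ε ^ 2 / (2 * c ^ 2))) :=
          Finset.sum_le_sum (fun i _ => hterm i)
      _ = d * ENNReal.ofReal (Real.exp (-nmin * ε ^ 2 / (2 * c ^ 2))) := by
          simp [Finset.sum_const, nsmul_eq_mul]
      _ = ENNReal.ofReal (d * Real.exp (-nmin * ε ^ 2 / (2 * c ^ 2))) := by
          rw [ENNReal.ofReal_mul (by positivity)]
          simp
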